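/- arXiv:1412.1110 — 2 statements merged into one kernel-verified Lean document; each statement's English description precedes it below -/
import Mathlib

section
/- For all integers m, n, r ≥ 0, in ℤ[q]: ∏_{ℓ=0}^{n-1} (1 + [ℓ+m+r]_q) = Σ_{i=0}^{n} [m+r]_q^{⟨n-i⟩} · qbinom(n,i) · ∏_{ℓ=0}^{i-1} (1 + [ℓ]_q). -/
open Finset Polynomial

/-- The q-integer [n]_q = 1 + q + ⋯ + q^{n-1} in ℤ[q]. -/
noncomputable def qint (n : ℕ) : Polynomial ℤ := ∑ i ∈ range n, X ^ i

/-- The q-rising factorial [n]_q^{⟨m⟩} = ∏_{i=n}^{n+m-1} [i]_q. -/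
noncomputable def qrise (n m : ℕ) : Polynomial ℤ := ∏ i ∈ range m, qint (n + i)

/-- The q-binomial coefficient. -/
noncomputable def qbinom : ℕ → ℕ → Polynomial ℤ
  | _, 0 => 1
  | 0, _ + 1 => 0
  | n + 1, k + 1 => qbinom n k + X ^ (k + 1) * qbinom n (k + 1)

lemma qint_add (a b : ℕ) : qint (a + b) = qint a + X ^ a * qint b := by
  unfold qint
  rw [Finset.sum_range_add, Finset.mul_sum]
  simp [pow_add]

lemma qrise_succ (a b : ℕ) : qrise a (b + 1) = qrise a b * qint (a + b) :=
  Finset.prod_range_succ _ _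

lemma qbinom_zero (n : ℕ) : qbinom n 0 = 1 := by cases n <;> rfl

lemma qbinom_of_lt : ∀ n k : ℕ, n < k → qbinom n k = 0
  | 0, _ + 1, _ => rfl
  | n + 1, k + 1, h => by
    have h1 := qbinom_of_lt n k (by omega)
    have h2 := qbinom_of_lt n (k + 1) (by omega)
    simp only [qbinom, h1, h2, mul_zero, add_zero]

lemma key (s : ℕ) : ∀ n, ∏ ℓ ∈ range n, (1 + qint (s + ℓ)) =
    ∑ i ∈ range (n + 1), qrise s (n - i) * qbinom n i * ∏ ℓ ∈ range i, (1 + qint ℓ) := by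
  intro n
  induction n with
  | zero => simp [qrise, qbinom_zero]
  | succ n ih =>
    rw [Finset.prod_range_succ, ih, Finset.sum_mul]
    -- per-term expansion on the RHS of the goal (which is the product side times sum)
    have per : ∀ i ∈ range (n + 1),
        (qrise s (n - i) * qbinom n i * ∏ ℓ ∈ range i, (1 + qint ℓ)) * (1 + qint (s + n)) =
        (qrise s (n - i) * qbinom n i * ∏ ℓ ∈ range (i + 1), (1 + qint ℓ)) +
        (X ^ i * (qrise s ((n - i) + 1) * qbinom n i * ∏ ℓ ∈ range i, (1 + qint ℓ))) := by
      intro i hi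
      rw [Finset.mem_range] at hi
      have hsn : s + n = i + (s + (n - i)) := by omega
      rw [hsn, qint_add, Finset.prod_range_succ, qrise_succ]
      ring
    rw [Finset.sum_congr rfl per, Finset.sum_add_distrib]
    -- now expand the LHS sum over range (n+2)
    rw [Finset.sum_range_succ'
      (fun i => qrise s (n + 1 - i) * qbinom (n + 1) i * ∏ ℓ ∈ range i, (1 + qint ℓ)) (n + 1)]
    have expand : ∀ i ∈ range (n + 1),
        qrise s (n + 1 - (i + 1)) * qbinom (n + 1) (i + 1) * ∏ ℓ ∈ range (i + 1), (1 + qint ℓ) =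
        (qrise s (n - i) * qbinom n i * ∏ ℓ ∈ range (i + 1), (1 + qint ℓ)) +
        (X ^ (i + 1) * (qrise s (n - i) * qbinom n (i + 1) * ∏ ℓ ∈ range (i + 1), (1 + qint ℓ))) := by
      intro i hi
      have : n + 1 - (i + 1) = n - i := by omega
      rw [this]
      simp only [qbinom]
      ring
    rw [Finset.sum_congr rfl expand, Finset.sum_add_distrib]
    simp only [Nat.sub_zero, qbinom_zero, Finset.prod_range_zero, mul_one]
    rw [add_assoc]
    congr 1
    -- remaining: shifted sum + qrise s (n+1) = Σ X^i * (qrise s (n-i+1) * qbinom n i * P i)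
    rw [Finset.sum_range_succ'
      (fun i => X ^ i * (qrise s ((n - i) + 1) * qbinom n i * ∏ ℓ ∈ range i, (1 + qint ℓ))) n]
    congr 1
    · rw [Finset.sum_range_succ, qbinom_of_lt n (n + 1) (by omega)]
      simp only [mul_zero, zero_mul, mul_zero, add_zero]
      refine Finset.sum_congr rfl fun i hi => ?_
      rw [Finset.mem_range] at hi
      have : n - (i + 1) + 1 = n - i := by omega
      rw [this]
    · simp [qbinom_zero]

theorem qprod_identity (m n r : ℕ) :
    ∏ ℓ ∈ range n, (1 + qint (ℓ + m + r)) =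
      ∑ i ∈ range (n + 1), qrise (m + r) (n - i) * qbinom n i *
        ∏ ℓ ∈ range i, (1 + qint ℓ) := by
  have := key (m + r) n
  rw [← this]
  refine Finset.prod_congr rfl fun ℓ _ => ?_
  have h : ℓ + m + r = m + r + ℓ := by omega
  rw [h]
end

section
/- Let R be a commutative ring and α, β, r, x ∈ R. For all integers m, n ≥ 0: B_{m+n;α,β,r}(x) = Σ_{i=0}^{n} Σ_{j=0}^{m} C(n,i) · x^j · S(m,j;α,β,r) · B_{i;α,β,r}(x) · ∏_{ℓ=0}^{n-i-1} ((m+ℓ)·α + j·β), where C(n,i) is the binomial coefficient and integer multiples (m+ℓ)·α, j·β are taken in R. -/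
open Finset

/-- The generalized Stirling numbers of Hsu and Shiue, with values in a commutative
ring `R`: `HS α β r 0 0 = 1`, `HS α β r n k = 0` for `k < 0` or `k > n`, and
`HS α β r n k = HS α β r (n-1) (k-1) + (α(n-1) + βk + r) * HS α β r (n-1) k` otherwise. -/
def HS {R : Type*} [CommRing R] (α β r : R) : ℕ → ℤ → R
  | 0, k => if k = 0 then 1 else 0
  | n + 1, k =>
      if k < 0 ∨ ((n : ℤ) + 1) < k then 0
      else HS α β r n (k - 1) + (α * (n : R) + β * (k : R) + r) * HS α β r n k

/-- The generalized Bell polynomial B_{n;α,β,r}(x) = Σ_{k=0}^{n} S(n,k;α,β,r) x^k. -/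
def genBell {R : Type*} [CommRing R] (α β r x : R) (n : ℕ) : R :=
  ∑ k ∈ range (n + 1), HS α β r n (k : ℤ) * x ^ k

open Polynomial

section Aux

variable {R : Type*} {T : Type*} [CommRing R] [CommRing T] (α β r x : R)


lemma HS_of_neg {n : ℕ} {k : ℤ} (hk : k < 0) : HS α β r n k = 0 := by
  cases n with
  | zero => rw [HS, if_neg (by omega)]
  | succ n => rw [HS, if_pos (Or.inl hk)]

lemma HS_of_gt {n : ℕ} {k : ℤ} (hk : (n : ℤ) < k) : HS α β r n k = 0 := by
  cases n with
  | zero => rw [HS, if_neg (by omega)]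
  | succ n => rw [HS, if_pos (Or.inr (by omega))]

lemma HS_succ (n : ℕ) {k : ℤ} (h0 : 0 ≤ k) (h1 : k ≤ (n : ℤ) + 1) :
    HS α β r (n + 1) k =
      HS α β r n (k - 1) + (α * (n : R) + β * (k : R) + r) * HS α β r n k := by
  rw [HS, if_neg (by omega)]

lemma map_HS (f : R →+* T) (n : ℕ) (k : ℤ) :
    f (HS α β r n k) = HS (f α) (f β) (f r) n k := by
  induction n generalizing k with
  | zero => rw [HS, HS]; split <;> simp
  | succ n ih =>
      rw [HS, HS]
      split
      · simp
      · simp only [map_add, map_mul, ih, map_natCast, map_intCast]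

lemma map_genBell (f : R →+* T) (n : ℕ) :
    f (genBell α β r x n) = genBell (f α) (f β) (f r) (f x) n := by
  simp [genBell, map_sum, map_mul, map_pow, map_HS]

lemma genBell_zero : genBell α β r x 0 = 1 := by simp [genBell, HS]

lemma genBell_succ (n : ℕ) :
    genBell α β r x (n + 1) =
      (x + (α * n + r)) * genBell α β r x n +
        β * ∑ k ∈ range (n + 1), ((k : ℕ) : R) * HS α β r n (k : ℤ) * x ^ k := by
  have key : ∀ k ∈ range (n + 2),
      HS α β r (n + 1) (k : ℤ) * x ^ k =
        HS α β r n ((k : ℤ) - 1) * x ^ k + (α * n + r) * (HS α β r n (k : ℤ) * x ^ k)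
          + β * (((k : ℕ) : R) * HS α β r n (k : ℤ) * x ^ k) := by
    intro k hk
    simp only [mem_range] at hk
    rw [HS_succ α β r n (by positivity) (by omega)]
    push_cast
    ring
  have h1 : ∑ k ∈ range (n + 2), HS α β r n ((k : ℤ) - 1) * x ^ k
      = x * genBell α β r x n := by
    rw [sum_range_succ']
    simp only [Nat.cast_zero, pow_zero, mul_one]
    rw [show ((0:ℤ) - 1) = -1 by ring, HS_of_neg α β r (k := -1) (by omega), add_zero,
      genBell, mul_sum]
    refine sum_congr rfl fun k hk => ?_
    push_cast
    rw [show ((k:ℤ) + 1 - 1) = (k:ℤ) by ring]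
    ring
  have h2 : ∑ k ∈ range (n + 2), (α * n + r) * (HS α β r n (k : ℤ) * x ^ k)
      = (α * n + r) * genBell α β r x n := by
    rw [genBell, mul_sum, sum_range_succ, HS_of_gt α β r (by push_cast; omega)]
    simp
  have h3 : ∑ k ∈ range (n + 2), β * (((k : ℕ) : R) * HS α β r n (k : ℤ) * x ^ k)
      = β * ∑ k ∈ range (n + 1), ((k : ℕ) : R) * HS α β r n (k : ℤ) * x ^ k := by
    rw [mul_sum, sum_range_succ, HS_of_gt α β r (by push_cast; omega)]
    simp
  rw [genBell, sum_congr rfl key, sum_add_distrib, sum_add_distrib, h1, h2, h3]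
  ring

lemma X_mul_derivative_genBell (n : ℕ) :
    (X : R[X]) * derivative (genBell (C α) (C β) (C r) X n)
      = ∑ k ∈ range (n + 1), ((k : ℕ) : R[X]) * HS (C α) (C β) (C r) n (k : ℤ) * X ^ k := by
  rw [genBell, derivative_sum, mul_sum]
  refine sum_congr rfl fun k _ => ?_
  rw [← map_HS α β r (C : R →+* R[X]) n (k : ℤ)]
  rcases k with _ | k
  · simp
  · rw [derivative_mul, derivative_C, zero_mul, zero_add, derivative_X_pow]
    simp only [Nat.succ_sub_one, Polynomial.C_eq_natCast]
    push_cast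
    ring

lemma poly_genBell_succ (n : ℕ) :
    genBell (C α) (C β) (C r) (X : R[X]) (n + 1)
      = (X + (C α * (n : R[X]) + C r)) * genBell (C α) (C β) (C r) X n
        + C β * (X * derivative (genBell (C α) (C β) (C r) X n)) := by
  rw [genBell_succ, X_mul_derivative_genBell]

def pp (α β : R) (m n i j : ℕ) : R :=
  ∏ ℓ ∈ range (n - i), (((m + ℓ : ℕ) : R) * α + (j : R) * β)

lemma pp_succ_succ (m n i j : ℕ) : pp α β m (n + 1) (i + 1) j = pp α β m n i j := by
  rw [pp, pp, Nat.succ_sub_succ]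

lemma pp_succ {i : ℕ} (h : i ≤ n) (m j : ℕ) :
    pp α β m (n + 1) i j = pp α β m n i j * (((m + (n - i) : ℕ) : R) * α + (j : R) * β) := by
  rw [pp, pp, show n + 1 - i = (n - i) + 1 by omega, prod_range_succ]

lemma target_eq (m n : ℕ) :
    (∑ i ∈ range (n + 1 + 1), ∑ j ∈ range (m + 1),
        C (((n+1).choose i : R) * HS α β r m (j : ℤ) * pp α β m (n+1) i j)
          * (X ^ j * genBell (C α) (C β) (C r) (X : R[X]) i))
    = ∑ i ∈ range (n + 1), ∑ j ∈ range (m + 1),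
        (C ((n.choose i : R) * HS α β r m (j : ℤ) * pp α β m n i j)
            * (X ^ j * genBell (C α) (C β) (C r) X (i+1))
         + C ((n.choose i : R) * HS α β r m (j : ℤ) * pp α β m n i j
              * (((m + (n - i) : ℕ) : R) * α + (j : R) * β))
            * (X ^ j * genBell (C α) (C β) (C r) X i)) := by
  have hG0 : ∑ i ∈ range (n + 1), ∑ j ∈ range (m + 1),
      C ((n.choose i : R) * HS α β r m (j : ℤ) * pp α β m n i j
          * (((m + (n - i) : ℕ) : R) * α + (j : R) * β))
        * (X ^ j * genBell (C α) (C β) (C r) (X : R[X]) i)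
      = ∑ i ∈ range (n + 1), ∑ j ∈ range (m + 1),
      C ((n.choose i : R) * HS α β r m (j : ℤ) * pp α β m (n+1) i j)
        * (X ^ j * genBell (C α) (C β) (C r) X i) := by
    refine sum_congr rfl fun i hi => sum_congr rfl fun j _ => ?_
    rw [pp_succ α β (mem_range_succ_iff.mp hi) m j]
    ring_nf
  rw [sum_range_succ']
  have hF : ∀ i ∈ range (n + 1), ∑ j ∈ range (m + 1),
      C (((n+1).choose (i+1) : R) * HS α β r m (j : ℤ) * pp α β m (n+1) (i+1) j)
        * (X ^ j * genBell (C α) (C β) (C r) (X : R[X]) (i+1))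
      = (∑ j ∈ range (m + 1),
          C ((n.choose i : R) * HS α β r m (j : ℤ) * pp α β m n i j)
            * (X ^ j * genBell (C α) (C β) (C r) X (i+1)))
        + ∑ j ∈ range (m + 1),
          C ((n.choose (i+1) : R) * HS α β r m (j : ℤ) * pp α β m (n+1) (i+1) j)
            * (X ^ j * genBell (C α) (C β) (C r) X (i+1)) := by
    intro i _
    rw [← sum_add_distrib]
    refine sum_congr rfl fun j _ => ?_
    rw [Nat.choose_succ_succ, pp_succ_succ, Nat.cast_add, add_mul, add_mul, C_add]
    ring
  rw [sum_congr rfl hF]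
  simp only [sum_add_distrib]
  rw [hG0, add_assoc]
  congr 1
  -- remaining: Σ_{i∈range(n+1)} G(i+1) + G 0' = Σ_{i∈range(n+1)} G i
  -- where G i uses n.choose i, pp m (n+1) i, b i ; and G 0' uses (n+1).choose 0 = 1
  have h2 := sum_range_succ' (fun i => ∑ j ∈ range (m + 1),
      C ((n.choose i : R) * HS α β r m (j : ℤ) * pp α β m (n+1) i j)
        * (X ^ j * genBell (C α) (C β) (C r) (X : R[X]) i)) (n + 1)
  rw [sum_range_succ] at h2
  simp only [Nat.choose_succ_self, Nat.cast_zero, zero_mul, map_zero, sum_const_zero,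
    add_zero] at h2
  rw [h2]
  simp only [Nat.choose_zero_right]

lemma per_term (N i j : ℕ) (c : R) :
    (X + (C α * (N : R[X]) + C r)) * (C c * (X ^ j * genBell (C α) (C β) (C r) (X : R[X]) i))
      + C β * (X * derivative (C c * (X ^ j * genBell (C α) (C β) (C r) X i)))
    = C c * (X ^ j * genBell (C α) (C β) (C r) X (i + 1))
      + C c * (C α * (N : R[X]) - C α * (i : R[X]) + C β * (j : R[X]))
          * (X ^ j * genBell (C α) (C β) (C r) X i) := by
  have hXj : (X : R[X]) * derivative (X ^ j : R[X]) = (j : R[X]) * X ^ j := by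
    rcases j with _ | j
    · simp
    · rw [derivative_X_pow]
      simp only [Nat.succ_sub_one, C_eq_natCast]
      ring
  rw [poly_genBell_succ, derivative_mul, derivative_C, zero_mul, zero_add, derivative_mul]
  linear_combination (C β * C c * genBell (C α) (C β) (C r) (X : R[X]) i) * hXj

lemma key_s19 (m n : ℕ) :
    genBell (C α) (C β) (C r) (X : R[X]) (m + n)
      = ∑ i ∈ range (n + 1), ∑ j ∈ range (m + 1),
          C ((n.choose i : R) * HS α β r m (j : ℤ) * pp α β m n i j)
            * (X ^ j * genBell (C α) (C β) (C r) X i) := by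
  induction n with
  | zero =>
      rw [Nat.add_zero, show (0:ℕ) + 1 = 1 from rfl, sum_range_one, genBell]
      refine sum_congr rfl fun j _ => ?_
      rw [← map_HS α β r (C : R →+* R[X]) m (j : ℤ), genBell_zero, pp]
      simp
  | succ n ih =>
      rw [show m + (n + 1) = (m + n) + 1 from rfl, poly_genBell_succ, ih]
      simp only [derivative_sum, mul_sum]
      simp only [← sum_add_distrib]
      rw [target_eq]
      refine sum_congr rfl fun i hi => sum_congr rfl fun j _ => ?_
      rw [per_term]
      have hc : C ((n.choose i : R) * HS α β r m (j : ℤ) * pp α β m n i j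
            * (((m + (n - i) : ℕ) : R) * α + (j : R) * β))
          = C ((n.choose i : R) * HS α β r m (j : ℤ) * pp α β m n i j)
            * (C α * ((m + n : ℕ) : R[X]) - C α * (i : R[X]) + C β * (j : R[X])) := by
        simp only [map_mul, map_add, map_natCast]
        push_cast [Nat.cast_sub (mem_range_succ_iff.mp hi)]
        ring
      rw [hc]


end Aux

theorem genBell_add {R : Type*} [CommRing R] (α β r x : R) (m n : ℕ) :
    genBell α β r x (m + n) =
      ∑ i ∈ range (n + 1), ∑ j ∈ range (m + 1),
        (n.choose i : R) * x ^ j * HS α β r m (j : ℤ) * genBell α β r x i *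
          ∏ ℓ ∈ range (n - i), (((m + ℓ : ℕ) : R) * α + (j : R) * β) := by
  have hb : ∀ N : ℕ, Polynomial.eval x (genBell (C α) (C β) (C r) X N) = genBell α β r x N := by
    intro N
    have h := map_genBell (C α) (C β) (C r) X (Polynomial.evalRingHom x) N
    simpa using h
  have h := congrArg (Polynomial.eval x) (key_s19 α β r m n)
  rw [hb] at h
  rw [h]
  rw [Polynomial.eval_finset_sum]
  refine sum_congr rfl fun i _ => ?_
  rw [Polynomial.eval_finset_sum]
  refine sum_congr rfl fun j _ => ?_
  rw [Polynomial.eval_mul, Polynomial.eval_C, Polynomial.eval_mul, Polynomial.eval_pow,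
    Polynomial.eval_X, hb, pp]
  ring
end
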